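/- Let m = n + k with n ≥ 1, k ≥ 0, fix h ∈ [n] and x, y ∈ [m] with x + y ≤ m + 1. Then the number of permutations σ of size m having exactly n left-to-right minima whose h-th left-to-right minimum (in order of increasing position) is located at position x with value y (i.e., σ(x) = y) equals S(x−1, h−1) · S(y−1, n−h) · C(m−x, m−x−y+1) · C(m−y, m−x−y+1) · (m−x−y+1)!, where S(p, q) denotes the number of permutations of size p with exactly q left-to-right minima (with S(0,0) = 1, S(p,0)=0 for p≥1). -/

import Mathlib

open scoped Classical

/-- The set of left-to-right minima of `σ`: indices `i` with `σ i < σ j` for all `j < i`. -/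
def lrMin {m : ℕ} (σ : Equiv.Perm (Fin m)) : Finset (Fin m) :=
  Finset.univ.filter fun i => ∀ j, j < i → σ i < σ j

/-- `S(p, q)`: the number of permutations of size `p` with exactly `q` left-to-right minima
(the unsigned Stirling numbers of the first kind). -/
noncomputable def stirlingLR (p q : ℕ) : ℕ :=
  (Finset.univ.filter (fun σ : Equiv.Perm (Fin p) => (lrMin σ).card = q)).card

namespace CardHth

open Finset Equiv

variable {m : ℕ}

lemma mem_lrMin {σ : Equiv.Perm (Fin m)} {p : Fin m} :
    p ∈ lrMin σ ↔ ∀ j, j < p → σ p < σ j := by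
  simp [lrMin]

/-- The data from which a permutation with prescribed `h`-th left-to-right minimum is built. -/
structure BD (m n h : ℕ) (x y : Fin m) : Type where
  T : Finset (Fin m)
  hT : T ⊆ Finset.Ioi y
  hTc : T.card = (x : ℕ)
  S : Finset (Fin m)
  hS : S ⊆ Finset.Ioi x
  hSc : S.card = (y : ℕ)
  α : Equiv.Perm (Fin (x : ℕ))
  hα : (lrMin α).card = h - 1
  β : Equiv.Perm (Fin (y : ℕ))
  hβ : (lrMin β).card = n - h
  γ : Equiv.Perm (Fin (m - 1 - (x : ℕ) - (y : ℕ)))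

namespace BD

variable {n h : ℕ} {x y : Fin m} (d : BD m n h x y)

lemma hUc : ((Finset.Ioi y) \ d.T).card = m - 1 - (x : ℕ) - (y : ℕ) := by
  rw [Finset.card_sdiff_of_subset d.hT, Fin.card_Ioi, d.hTc]; omega

lemma hQc : ((Finset.Ioi x) \ d.S).card = m - 1 - (x : ℕ) - (y : ℕ) := by
  rw [Finset.card_sdiff_of_subset d.hS, Fin.card_Ioi, d.hSc]

/-- the underlying function of the permutation built from the data -/
noncomputable def fb : Fin m → Fin m := fun p =>
  if hp : p < x then ↑(d.T.orderIsoOfFin d.hTc (d.α ⟨p.1, hp⟩))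
  else if hpx : p = x then y
  else if hpS : p ∈ d.S then
    ⟨↑(d.β ((d.S.orderIsoOfFin d.hSc).symm ⟨p, hpS⟩)), lt_trans (Fin.is_lt _) y.isLt⟩
  else ↑(((Finset.Ioi y) \ d.T).orderIsoOfFin d.hUc
    (d.γ ((((Finset.Ioi x) \ d.S).orderIsoOfFin d.hQc).symm
      ⟨p, Finset.mem_sdiff.mpr ⟨Finset.mem_Ioi.mpr
        (lt_of_le_of_ne (not_lt.mp hp) (Ne.symm hpx)), hpS⟩⟩)))

lemma fb_lt {p : Fin m} (hp : p < x) :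
    d.fb p = ↑(d.T.orderIsoOfFin d.hTc (d.α ⟨p.1, hp⟩)) := by
  simp [fb, dif_pos hp]

lemma fb_x : d.fb x = y := by
  simp [fb]

lemma fb_S {p : Fin m} (hpS : p ∈ d.S) :
    d.fb p = ⟨↑(d.β ((d.S.orderIsoOfFin d.hSc).symm ⟨p, hpS⟩)),
      lt_trans (Fin.is_lt _) y.isLt⟩ := by
  have hxp : x < p := Finset.mem_Ioi.mp (d.hS hpS)
  have h1 : ¬ p < x := not_lt.mpr (le_of_lt hxp)
  have h2 : p ≠ x := ne_of_gt hxp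
  simp [fb, dif_neg h1, dif_neg h2, dif_pos hpS]

lemma fb_Q {p : Fin m} (hpQ : p ∈ (Finset.Ioi x) \ d.S) :
    d.fb p = ↑(((Finset.Ioi y) \ d.T).orderIsoOfFin d.hUc
      (d.γ ((((Finset.Ioi x) \ d.S).orderIsoOfFin d.hQc).symm ⟨p, hpQ⟩))) := by
  obtain ⟨hxp, hpS⟩ := Finset.mem_sdiff.mp hpQ
  have hxp' := Finset.mem_Ioi.mp hxp
  have h1 : ¬ p < x := not_lt.mpr (le_of_lt hxp')
  have h2 : p ≠ x := ne_of_gt hxp'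
  simp only [fb, dif_neg h1, dif_neg h2, dif_neg hpS]

lemma pos_cases (p : Fin m) : p < x ∨ p = x ∨ p ∈ d.S ∨ p ∈ (Finset.Ioi x) \ d.S := by
  rcases lt_trichotomy p x with h | h | h
  · exact Or.inl h
  · exact Or.inr (Or.inl h)
  · by_cases hs : p ∈ d.S
    · exact Or.inr (Or.inr (Or.inl hs))
    · exact Or.inr (Or.inr (Or.inr (Finset.mem_sdiff.mpr ⟨Finset.mem_Ioi.mpr h, hs⟩)))

lemma fb_lt_mem {p : Fin m} (hp : p < x) : d.fb p ∈ d.T := by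
  rw [d.fb_lt hp]; exact (d.T.orderIsoOfFin d.hTc _).2

lemma fb_lt_gt {p : Fin m} (hp : p < x) : y < d.fb p :=
  Finset.mem_Ioi.mp (d.hT (d.fb_lt_mem hp))

lemma fb_S_lt {p : Fin m} (hpS : p ∈ d.S) : d.fb p < y := by
  rw [d.fb_S hpS]; exact Fin.lt_def.mpr (by simp)

lemma fb_Q_mem {p : Fin m} (hpQ : p ∈ (Finset.Ioi x) \ d.S) :
    d.fb p ∈ (Finset.Ioi y) \ d.T := by
  rw [d.fb_Q hpQ]; exact (((Finset.Ioi y) \ d.T).orderIsoOfFin d.hUc _).2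

lemma fb_Q_gt {p : Fin m} (hpQ : p ∈ (Finset.Ioi x) \ d.S) : y < d.fb p :=
  Finset.mem_Ioi.mp (Finset.mem_sdiff.mp (d.fb_Q_mem hpQ)).1

lemma fb_injective : Function.Injective d.fb := by
  intro p q hpq
  rcases d.pos_cases p with hp | hp | hp | hp <;> rcases d.pos_cases q with hq | hq | hq | hq
  · -- both before x
    rw [d.fb_lt hp, d.fb_lt hq] at hpq
    have h1 := d.α.injective ((d.T.orderIsoOfFin d.hTc).injective (Subtype.coe_injective hpq))
    have h2 : (p : ℕ) = (q : ℕ) := Fin.mk_eq_mk.mp h1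
    exact Fin.ext h2
  · exact absurd hpq (by rw [hq, d.fb_x]; exact ne_of_gt (d.fb_lt_gt hp))
  · exact absurd hpq (ne_of_gt (lt_trans (d.fb_S_lt hq) (d.fb_lt_gt hp)))
  · exact absurd ((Finset.mem_sdiff.mp (d.fb_Q_mem hq)).2) (hpq ▸ (fun hh => hh (d.fb_lt_mem hp)))
  · exact absurd hpq (ne_of_lt (by rw [hp, d.fb_x]; exact d.fb_lt_gt hq))
  · exact hp.trans hq.symm
  · exact absurd hpq (ne_of_gt (by rw [hp, d.fb_x]; exact d.fb_S_lt hq))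
  · exact absurd hpq (ne_of_lt (by rw [hp, d.fb_x]; exact d.fb_Q_gt hq))
  · exact absurd hpq (ne_of_lt (lt_trans (d.fb_S_lt hp) (d.fb_lt_gt hq)))
  · exact absurd hpq (ne_of_lt (by rw [hq, d.fb_x]; exact d.fb_S_lt hp))
  · -- both in S
    rw [d.fb_S hp, d.fb_S hq] at hpq
    have hv : ((d.β ((d.S.orderIsoOfFin d.hSc).symm ⟨p, hp⟩)) : ℕ) =
        ((d.β ((d.S.orderIsoOfFin d.hSc).symm ⟨q, hq⟩)) : ℕ) := Fin.mk_eq_mk.mp hpq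
    have h0 := Fin.ext hv
    have h1 := (d.S.orderIsoOfFin d.hSc).symm.injective (d.β.injective h0)
    exact congrArg Subtype.val h1
  · exact absurd hpq (ne_of_lt (lt_trans (d.fb_S_lt hp) (d.fb_Q_gt hq)))
  · exact absurd ((Finset.mem_sdiff.mp (d.fb_Q_mem hp)).2) (fun hh => hh (hpq ▸ d.fb_lt_mem hq))
  · exact absurd hpq (ne_of_gt (by rw [hq, d.fb_x]; exact d.fb_Q_gt hp))
  · exact absurd hpq (ne_of_gt (lt_trans (d.fb_S_lt hq) (d.fb_Q_gt hp)))
  · -- both in Q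
    rw [d.fb_Q hp, d.fb_Q hq] at hpq
    have h1 := ((((Finset.Ioi x) \ d.S)).orderIsoOfFin d.hQc).symm.injective
      (d.γ.injective ((((Finset.Ioi y) \ d.T).orderIsoOfFin d.hUc).injective
        (Subtype.coe_injective hpq)))
    exact congrArg Subtype.val h1

/-- The permutation built from the data. -/
noncomputable def toPerm : Equiv.Perm (Fin m) :=
  Equiv.ofBijective d.fb (Finite.injective_iff_bijective.mp d.fb_injective)

@[simp] lemma toPerm_apply (p : Fin m) : d.toPerm p = d.fb p := rfl

lemma x_mem_lrMin : x ∈ lrMin d.toPerm := by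
  rw [mem_lrMin]
  intro j hj
  rw [toPerm_apply, toPerm_apply, d.fb_x]
  exact d.fb_lt_gt hj

lemma mem_lrMin_lt {p : Fin m} (hp : p < x) :
    p ∈ lrMin d.toPerm ↔ (⟨p.1, hp⟩ : Fin (x : ℕ)) ∈ lrMin d.α := by
  rw [mem_lrMin, mem_lrMin]
  constructor
  · intro H j hj
    have hjx : (⟨j.1, lt_trans j.2 x.isLt⟩ : Fin m) < x := j.2
    have hjp : (⟨j.1, lt_trans j.2 x.isLt⟩ : Fin m) < p := hj
    have := H _ hjp
    rw [toPerm_apply, toPerm_apply, d.fb_lt hp, d.fb_lt hjx] at this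
    have h2 := (Subtype.coe_lt_coe.mp this)
    exact (d.T.orderIsoOfFin d.hTc).lt_iff_lt.mp h2
  · intro H j hjp
    have hjx : j < x := lt_trans hjp hp
    rw [toPerm_apply, toPerm_apply, d.fb_lt hp, d.fb_lt hjx]
    refine Subtype.coe_lt_coe.mpr ((d.T.orderIsoOfFin d.hTc).lt_iff_lt.mpr ?_)
    exact H ⟨j.1, hjx⟩ hjp

lemma mem_lrMin_S {p : Fin m} (hp : p ∈ d.S) :
    p ∈ lrMin d.toPerm ↔ (d.S.orderIsoOfFin d.hSc).symm ⟨p, hp⟩ ∈ lrMin d.β := by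
  rw [mem_lrMin, mem_lrMin]
  constructor
  · intro H r hr
    have hjS : ↑(d.S.orderIsoOfFin d.hSc r) ∈ d.S := (d.S.orderIsoOfFin d.hSc r).2
    have hjp : (↑(d.S.orderIsoOfFin d.hSc r) : Fin m) < p := by
      have h1 : d.S.orderIsoOfFin d.hSc r < ⟨p, hp⟩ := by
        have := (d.S.orderIsoOfFin d.hSc).lt_iff_lt.mpr hr
        rwa [OrderIso.apply_symm_apply] at this
      exact Subtype.coe_lt_coe.mpr h1
    have := H _ hjp
    rw [toPerm_apply, toPerm_apply, d.fb_S hp, d.fb_S hjS] at this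
    have hval : ((d.β ((d.S.orderIsoOfFin d.hSc).symm ⟨p, hp⟩)) : ℕ) <
        ((d.β ((d.S.orderIsoOfFin d.hSc).symm ⟨↑(d.S.orderIsoOfFin d.hSc r), hjS⟩)) : ℕ) :=
      Fin.mk_lt_mk.mp this
    have hre : ((d.S.orderIsoOfFin d.hSc).symm ⟨↑(d.S.orderIsoOfFin d.hSc r), hjS⟩) = r := by
      have : (⟨↑(d.S.orderIsoOfFin d.hSc r), hjS⟩ : {v // v ∈ d.S}) =
          d.S.orderIsoOfFin d.hSc r := Subtype.ext rfl
      rw [this, OrderIso.symm_apply_apply]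
    rw [hre] at hval
    exact Fin.lt_def.mpr hval
  · intro H j hjp
    rw [toPerm_apply, toPerm_apply, d.fb_S hp]
    rcases d.pos_cases j with hj | hj | hj | hj
    · exact lt_trans (Fin.mk_lt_mk.mpr (Fin.is_lt _)) (d.fb_lt_gt hj)
    · rw [hj, d.fb_x]; exact Fin.mk_lt_mk.mpr (Fin.is_lt _)
    · rw [d.fb_S hj]
      refine Fin.mk_lt_mk.mpr ?_
      have hr : (d.S.orderIsoOfFin d.hSc).symm ⟨j, hj⟩ <
          (d.S.orderIsoOfFin d.hSc).symm ⟨p, hp⟩ := by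
        refine (d.S.orderIsoOfFin d.hSc).symm.lt_iff_lt.mpr ?_
        exact Subtype.coe_lt_coe.mp hjp
      exact Fin.lt_def.mp (H _ hr)
    · exact lt_trans (Fin.mk_lt_mk.mpr (Fin.is_lt _)) (d.fb_Q_gt hj)

lemma not_mem_lrMin_Q {p : Fin m} (hp : p ∈ (Finset.Ioi x) \ d.S) :
    p ∉ lrMin d.toPerm := by
  rw [mem_lrMin]
  intro H
  have hxp : x < p := Finset.mem_Ioi.mp (Finset.mem_sdiff.mp hp).1
  have := H x hxp
  rw [toPerm_apply, toPerm_apply, d.fb_x] at this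
  exact absurd (d.fb_Q_gt hp) (not_lt.mpr (le_of_lt this))

lemma lrMin_eq : lrMin d.toPerm =
    ((lrMin d.α).image (fun i => (⟨i.1, lt_trans i.2 x.isLt⟩ : Fin m))) ∪ {x} ∪
      ((lrMin d.β).image (fun i => ↑(d.S.orderIsoOfFin d.hSc i))) := by
  ext p
  simp only [Finset.mem_union, Finset.mem_image, Finset.mem_singleton]
  rcases d.pos_cases p with hp | hp | hp | hp
  · rw [d.mem_lrMin_lt hp]
    constructor
    · intro hmem; exact Or.inl (Or.inl ⟨⟨p.1, hp⟩, hmem, rfl⟩)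
    · rintro ((⟨i, hi, hie⟩ | hpx) | ⟨i, hi, hie⟩)
      · have : (⟨p.1, hp⟩ : Fin (x : ℕ)) = i := by
          refine Fin.ext ?_
          have := congrArg Fin.val hie
          simpa using this.symm
        rwa [this]
      · exact absurd hpx (ne_of_lt hp)
      · exfalso
        have hxlt : x < p := by
          rw [← hie]
          exact Finset.mem_Ioi.mp (d.hS (d.S.orderIsoOfFin d.hSc i).2)
        exact absurd hp (not_lt.mpr (le_of_lt hxlt))
  · subst hp
    simp [d.x_mem_lrMin]
  · have hxp : x < p := Finset.mem_Ioi.mp (d.hS hp)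
    rw [d.mem_lrMin_S hp]
    constructor
    · intro hmem
      refine Or.inr ⟨_, hmem, ?_⟩
      rw [OrderIso.apply_symm_apply]
    · rintro ((⟨i, hi, hie⟩ | hpx) | ⟨i, hi, hie⟩)
      · exfalso
        have : p < x := by rw [← hie]; exact Fin.mk_lt_mk.mpr i.2
        exact absurd this (not_lt.mpr (le_of_lt hxp))
      · exact absurd hpx.symm (ne_of_lt hxp)
      · have : (d.S.orderIsoOfFin d.hSc) i = ⟨p, hp⟩ := Subtype.ext hie
        rw [← this, OrderIso.symm_apply_apply]
        exact hi
  · have hxp : x < p := Finset.mem_Ioi.mp (Finset.mem_sdiff.mp hp).1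
    have hnS : p ∉ d.S := (Finset.mem_sdiff.mp hp).2
    simp only [d.not_mem_lrMin_Q hp, false_iff]
    push_neg
    refine ⟨⟨fun i hi hie => ?_, ne_of_gt hxp⟩, fun i hi hie => ?_⟩
    · have : p < x := by rw [← hie]; exact Fin.mk_lt_mk.mpr i.2
      exact absurd this (not_lt.mpr (le_of_lt hxp))
    · exact hnS (hie ▸ (d.S.orderIsoOfFin d.hSc i).2)

lemma emb_injective : Function.Injective (fun i : Fin (x : ℕ) => (⟨i.1, lt_trans i.2 x.isLt⟩ : Fin m)) := by
  intro a b hab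
  exact Fin.ext (Fin.mk_eq_mk.mp hab)

lemma eS_coe_injective :
    Function.Injective (fun i : Fin (y : ℕ) => (↑(d.S.orderIsoOfFin d.hSc i) : Fin m)) := by
  intro a b hab
  exact (d.S.orderIsoOfFin d.hSc).injective (Subtype.ext hab)

lemma disj1 : Disjoint ((lrMin d.α).image (fun i => (⟨i.1, lt_trans i.2 x.isLt⟩ : Fin m)))
    ({x} : Finset (Fin m)) := by
  rw [Finset.disjoint_left]
  rintro a ha hax
  rw [Finset.mem_singleton] at hax
  obtain ⟨i, _, hie⟩ := Finset.mem_image.mp ha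
  have : a < x := by rw [← hie]; exact Fin.mk_lt_mk.mpr i.2
  exact absurd hax (ne_of_lt this)

lemma disj2 : Disjoint
    (((lrMin d.α).image (fun i => (⟨i.1, lt_trans i.2 x.isLt⟩ : Fin m))) ∪ {x})
    ((lrMin d.β).image (fun i => ↑(d.S.orderIsoOfFin d.hSc i))) := by
  rw [Finset.disjoint_left]
  rintro a ha ha2
  obtain ⟨i, _, hie⟩ := Finset.mem_image.mp ha2
  have hgt : x < a := by
    rw [← hie]; exact Finset.mem_Ioi.mp (d.hS (d.S.orderIsoOfFin d.hSc i).2)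
  rcases Finset.mem_union.mp ha with h1 | h1
  · obtain ⟨j, _, hje⟩ := Finset.mem_image.mp h1
    have : a < x := by rw [← hje]; exact Fin.mk_lt_mk.mpr j.2
    exact absurd hgt (not_lt.mpr (le_of_lt this))
  · rw [Finset.mem_singleton] at h1
    rw [h1] at hgt; exact lt_irrefl _ hgt
  
lemma card_lrMin (hh1 : 1 ≤ h) (hhn : h ≤ n) : (lrMin d.toPerm).card = n := by
  rw [d.lrMin_eq, Finset.card_union_of_disjoint d.disj2,
    Finset.card_union_of_disjoint d.disj1,
    Finset.card_image_of_injective _ (emb_injective (x := x)),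
    Finset.card_image_of_injective _ d.eS_coe_injective,
    Finset.card_singleton, d.hα, d.hβ]
  omega

lemma card_filter_le (hh1 : 1 ≤ h) :
    ((lrMin d.toPerm).filter (fun i => i ≤ x)).card = h := by
  rw [d.lrMin_eq, Finset.filter_union, Finset.filter_union]
  have e1 : ((lrMin d.α).image (fun i => (⟨i.1, lt_trans i.2 x.isLt⟩ : Fin m))).filter
      (fun i => i ≤ x) = (lrMin d.α).image (fun i => (⟨i.1, lt_trans i.2 x.isLt⟩ : Fin m)) := by
    refine Finset.filter_true_of_mem ?_
    intro a ha
    obtain ⟨i, _, hie⟩ := Finset.mem_image.mp ha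
    have : a < x := by rw [← hie]; exact Fin.mk_lt_mk.mpr i.2
    exact le_of_lt this
  have e2 : ({x} : Finset (Fin m)).filter (fun i => i ≤ x) = {x} := by
    refine Finset.filter_true_of_mem ?_
    intro a ha
    rw [Finset.mem_singleton] at ha
    exact le_of_eq ha
  have e3 : ((lrMin d.β).image (fun i => (↑(d.S.orderIsoOfFin d.hSc i) : Fin m))).filter
      (fun i => i ≤ x) = ∅ := by
    refine Finset.filter_false_of_mem ?_
    intro a ha
    obtain ⟨i, _, hie⟩ := Finset.mem_image.mp ha
    have hgt : x < a := by
      rw [← hie]; exact Finset.mem_Ioi.mp (d.hS (d.S.orderIsoOfFin d.hSc i).2)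
    exact not_le.mpr hgt
  rw [e1, e2, e3, Finset.union_empty, Finset.card_union_of_disjoint d.disj1,
    Finset.card_image_of_injective _ (emb_injective (x := x)), Finset.card_singleton, d.hα]
  omega

lemma toPerm_x : d.toPerm x = y := d.fb_x

end BD

section Inv

variable (x y : Fin m) (σ : Equiv.Perm (Fin m))

/-- values occupying the positions before `x` -/
def Tof : Finset (Fin m) := (Finset.Iio x).image σ

/-- positions after `x` holding values below `y` -/
def Sof : Finset (Fin m) := (Finset.Ioi x).filter (fun p => σ p < y)

lemma Tof_card : (Tof x σ).card = (x : ℕ) := by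
  rw [Tof, Finset.card_image_of_injective _ σ.injective, Fin.card_Iio]

lemma Sof_subset : Sof x y σ ⊆ Finset.Ioi x := Finset.filter_subset _ _

lemma lt_of_mem_Sof {p : Fin m} (hp : p ∈ Sof x y σ) : σ p < y :=
  (Finset.mem_filter.mp hp).2

variable {x y σ}

lemma gt_of_lt (h2 : x ∈ lrMin σ) (h3 : σ x = y) {j : Fin m} (hj : j < x) : y < σ j := by
  rw [← h3]; exact mem_lrMin.mp h2 j hj

lemma Tof_subset (h2 : x ∈ lrMin σ) (h3 : σ x = y) : Tof x σ ⊆ Finset.Ioi y := by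
  intro v hv
  obtain ⟨j, hj, hje⟩ := Finset.mem_image.mp hv
  rw [Finset.mem_Ioi, ← hje]
  exact gt_of_lt h2 h3 (Finset.mem_Iio.mp hj)

lemma Sof_card (h2 : x ∈ lrMin σ) (h3 : σ x = y) : (Sof x y σ).card = (y : ℕ) := by
  have himg : (Sof x y σ).image σ = Finset.Iio y := by
    ext v
    simp only [Finset.mem_image, Sof, Finset.mem_filter, Finset.mem_Iio, Finset.mem_Ioi]
    constructor
    · rintro ⟨p, ⟨_, hpv⟩, rfl⟩; exact hpv
    · intro hv
      refine ⟨σ.symm v, ⟨?_, ?_⟩, σ.apply_symm_apply v⟩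
      · rcases lt_trichotomy (σ.symm v) x with hlt | heq | hgt
        · exfalso
          have := gt_of_lt h2 h3 hlt
          rw [σ.apply_symm_apply] at this
          exact absurd hv (not_lt.mpr (le_of_lt this))
        · exfalso
          have : σ (σ.symm v) = y := by rw [heq, h3]
          rw [σ.apply_symm_apply] at this
          exact absurd hv (this ▸ lt_irrefl v)
        · exact hgt
      · rw [σ.apply_symm_apply]; exact hv
  have := congrArg Finset.card himg
  rwa [Finset.card_image_of_injective _ σ.injective, Fin.card_Iio] at this

lemma mem_Uof (h2 : x ∈ lrMin σ) (h3 : σ x = y) {p : Fin m}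
    (hp : p ∈ (Finset.Ioi x) \ Sof x y σ) : σ p ∈ (Finset.Ioi y) \ Tof x σ := by
  obtain ⟨hxp, hpS⟩ := Finset.mem_sdiff.mp hp
  have hxp' := Finset.mem_Ioi.mp hxp
  rw [Finset.mem_sdiff, Finset.mem_Ioi]
  constructor
  · have hy : ¬ σ p < y := fun hc => hpS (Finset.mem_filter.mpr ⟨hxp, hc⟩)
    have hne : σ p ≠ y := by
      intro hc
      exact absurd (σ.injective (hc.trans h3.symm)) (ne_of_gt hxp')
    exact lt_of_le_of_ne (not_lt.mp hy) (Ne.symm hne)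
  · intro hc
    obtain ⟨j, hj, hje⟩ := Finset.mem_image.mp hc
    have : j = p := σ.injective hje
    rw [this] at hj
    exact absurd (Finset.mem_Iio.mp hj) (not_lt.mpr (le_of_lt hxp'))

variable (x y σ)

/-- the pattern of the values before position `x` -/
noncomputable def αof : Equiv.Perm (Fin (x : ℕ)) :=
  Equiv.ofBijective
    (fun i => ((Tof x σ).orderIsoOfFin (Tof_card x σ)).symm
      ⟨σ ⟨i.1, lt_trans i.2 x.isLt⟩,
        Finset.mem_image.mpr ⟨⟨i.1, lt_trans i.2 x.isLt⟩, Finset.mem_Iio.mpr i.2, rfl⟩⟩)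
    (Finite.injective_iff_bijective.mp (by
      intro a b hab
      have h1 := Subtype.mk_eq_mk.mp
        ((((Tof x σ).orderIsoOfFin (Tof_card x σ)).symm.injective) hab)
      have h2 := σ.injective h1
      exact Fin.ext (Fin.mk_eq_mk.mp h2)))

/-- the pattern of the values below `y` -/
noncomputable def βof (hc : (Sof x y σ).card = (y : ℕ))
    (hlt : ∀ p ∈ Sof x y σ, σ p < y) : Equiv.Perm (Fin (y : ℕ)) :=
  Equiv.ofBijective
    (fun i => ⟨(σ ((Sof x y σ).orderIsoOfFin hc i)).1,
      hlt _ ((Sof x y σ).orderIsoOfFin hc i).2⟩)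
    (Finite.injective_iff_bijective.mp (by
      intro a b hab
      have h1 : (σ ((Sof x y σ).orderIsoOfFin hc a) : Fin m) =
          σ ((Sof x y σ).orderIsoOfFin hc b) := Fin.ext (Fin.mk_eq_mk.mp hab)
      have h2 := σ.injective h1
      exact ((Sof x y σ).orderIsoOfFin hc).injective (Subtype.ext h2)))

/-- the pattern of the remaining values -/
noncomputable def γof {R : ℕ} (hUc : ((Finset.Ioi y) \ Tof x σ).card = R)
    (hQc : ((Finset.Ioi x) \ Sof x y σ).card = R)
    (hmem : ∀ p ∈ (Finset.Ioi x) \ Sof x y σ, σ p ∈ (Finset.Ioi y) \ Tof x σ) :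
    Equiv.Perm (Fin R) :=
  Equiv.ofBijective
    (fun i => (((Finset.Ioi y) \ Tof x σ).orderIsoOfFin hUc).symm
      ⟨σ (((Finset.Ioi x) \ Sof x y σ).orderIsoOfFin hQc i),
        hmem _ (((Finset.Ioi x) \ Sof x y σ).orderIsoOfFin hQc i).2⟩)
    (Finite.injective_iff_bijective.mp (by
      intro a b hab
      have h1 := Subtype.mk_eq_mk.mp
        (((((Finset.Ioi y) \ Tof x σ)).orderIsoOfFin hUc).symm.injective hab)
      have h2 := σ.injective h1
      exact (((Finset.Ioi x) \ Sof x y σ).orderIsoOfFin hQc).injective (Subtype.ext h2)))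

end Inv

section Inv2

variable {n h : ℕ} {x y : Fin m} {σ : Equiv.Perm (Fin m)}

lemma αof_apply (i : Fin (x : ℕ)) : αof x σ i =
    ((Tof x σ).orderIsoOfFin (Tof_card x σ)).symm
      ⟨σ ⟨i.1, lt_trans i.2 x.isLt⟩,
        Finset.mem_image.mpr ⟨⟨i.1, lt_trans i.2 x.isLt⟩, Finset.mem_Iio.mpr i.2, rfl⟩⟩ := rfl

lemma mem_lrMin_iff_αof (i : Fin (x : ℕ)) :
    (⟨i.1, lt_trans i.2 x.isLt⟩ : Fin m) ∈ lrMin σ ↔ i ∈ lrMin (αof x σ) := by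
  rw [mem_lrMin, mem_lrMin]
  have key : ∀ a b : Fin (x : ℕ), αof x σ a < αof x σ b ↔
      σ ⟨a.1, lt_trans a.2 x.isLt⟩ < σ ⟨b.1, lt_trans b.2 x.isLt⟩ := by
    intro a b
    rw [αof_apply, αof_apply]
    exact Iff.trans (((Tof x σ).orderIsoOfFin (Tof_card x σ)).symm.lt_iff_lt) Subtype.mk_lt_mk
  constructor
  · intro H j hj
    rw [key]
    exact H ⟨j.1, lt_trans j.2 x.isLt⟩ hj
  · intro H p hp
    have hpx : p < x := lt_trans hp i.2
    have := (key i ⟨p.1, hpx⟩).mp (H ⟨p.1, hpx⟩ hp)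
    exact this

lemma filter_lt_card (h2 : x ∈ lrMin σ)
    (h4 : ((lrMin σ).filter (fun i => i ≤ x)).card = h) :
    ((lrMin σ).filter (fun i => i < x)).card = h - 1 := by
  have he : (lrMin σ).filter (fun i => i ≤ x) =
      insert x ((lrMin σ).filter (fun i => i < x)) := by
    ext p
    simp only [Finset.mem_filter, Finset.mem_insert]
    constructor
    · rintro ⟨hp, hle⟩
      rcases lt_or_eq_of_le hle with hlt | heq
      · exact Or.inr ⟨hp, hlt⟩
      · exact Or.inl heq
    · rintro (heq | ⟨hp, hlt⟩)
      · exact ⟨heq ▸ h2, le_of_eq heq⟩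
      · exact ⟨hp, le_of_lt hlt⟩
  have hx : x ∉ (lrMin σ).filter (fun i => i < x) := by
    simp only [Finset.mem_filter]
    rintro ⟨_, hc⟩
    exact lt_irrefl x hc
  rw [he, Finset.card_insert_of_notMem hx] at h4
  omega

lemma αof_lrMin_card (h2 : x ∈ lrMin σ)
    (h4 : ((lrMin σ).filter (fun i => i ≤ x)).card = h) :
    (lrMin (αof x σ)).card = h - 1 := by
  rw [← filter_lt_card h2 h4]
  refine Finset.card_bij (fun i _ => (⟨i.1, lt_trans i.2 x.isLt⟩ : Fin m)) ?_ ?_ ?_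
  · intro i hi
    rw [Finset.mem_filter]
    exact ⟨(mem_lrMin_iff_αof i).mpr hi, i.2⟩
  · intro a _ b _ hab
    exact Fin.ext (Fin.mk_eq_mk.mp hab)
  · intro p hp
    obtain ⟨hpl, hpx⟩ := Finset.mem_filter.mp hp
    exact ⟨⟨p.1, hpx⟩, (mem_lrMin_iff_αof _).mp (by simpa using hpl), rfl⟩

lemma βof_apply (hc : (Sof x y σ).card = (y : ℕ)) (hlt : ∀ p ∈ Sof x y σ, σ p < y)
    (i : Fin (y : ℕ)) : βof x y σ hc hlt i =
      ⟨(σ ((Sof x y σ).orderIsoOfFin hc i)).1,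
        hlt _ ((Sof x y σ).orderIsoOfFin hc i).2⟩ := rfl

lemma mem_lrMin_iff_βof (h2 : x ∈ lrMin σ) (h3 : σ x = y)
    (hc : (Sof x y σ).card = (y : ℕ)) (hlt : ∀ p ∈ Sof x y σ, σ p < y)
    {p : Fin m} (hp : p ∈ Sof x y σ) :
    p ∈ lrMin σ ↔ ((Sof x y σ).orderIsoOfFin hc).symm ⟨p, hp⟩ ∈ lrMin (βof x y σ hc hlt) := by
  rw [mem_lrMin, mem_lrMin]
  have key : ∀ a b : Fin (y : ℕ), βof x y σ hc hlt a < βof x y σ hc hlt b ↔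
      σ ((Sof x y σ).orderIsoOfFin hc a) < σ ((Sof x y σ).orderIsoOfFin hc b) := by
    intro a b
    rw [βof_apply, βof_apply]
    exact Fin.mk_lt_mk
  have heq : ((Sof x y σ).orderIsoOfFin hc) (((Sof x y σ).orderIsoOfFin hc).symm ⟨p, hp⟩) =
      ⟨p, hp⟩ := OrderIso.apply_symm_apply _ _
  constructor
  · intro H r hr
    rw [key, heq]
    have hlt2 : (↑((Sof x y σ).orderIsoOfFin hc r) : Fin m) < p := by
      have h5 : (Sof x y σ).orderIsoOfFin hc r < ⟨p, hp⟩ := by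
        have := ((Sof x y σ).orderIsoOfFin hc).lt_iff_lt.mpr hr
        rwa [heq] at this
      exact Subtype.coe_lt_coe.mpr h5
    exact H _ hlt2
  · intro H j hj
    rcases lt_trichotomy j x with hjx | hjx | hjx
    · exact lt_trans (hlt p hp) (gt_of_lt h2 h3 hjx)
    · rw [hjx, h3]; exact hlt p hp
    · by_cases hjS : j ∈ Sof x y σ
      · have hr : ((Sof x y σ).orderIsoOfFin hc).symm ⟨j, hjS⟩ <
            ((Sof x y σ).orderIsoOfFin hc).symm ⟨p, hp⟩ :=
          ((Sof x y σ).orderIsoOfFin hc).symm.lt_iff_lt.mpr (Subtype.mk_lt_mk.mpr hj)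
        have := (key _ _).mp (H _ hr)
        rw [heq] at this
        have hje : ((Sof x y σ).orderIsoOfFin hc) (((Sof x y σ).orderIsoOfFin hc).symm
            ⟨j, hjS⟩) = ⟨j, hjS⟩ := OrderIso.apply_symm_apply _ _
        rwa [hje] at this
      · have : ¬ σ j < y := fun hcon =>
          hjS (Finset.mem_filter.mpr ⟨Finset.mem_Ioi.mpr hjx, hcon⟩)
        exact lt_of_lt_of_le (hlt p hp) (not_lt.mp this)

lemma filter_gt_card (h1 : (lrMin σ).card = n)
    (h4 : ((lrMin σ).filter (fun i => i ≤ x)).card = h) :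
    ((lrMin σ).filter (fun i => x < i)).card = n - h := by
  have := Finset.card_filter_add_card_filter_not
    (s := lrMin σ) (p := fun i => i ≤ x)
  have he : (lrMin σ).filter (fun i => ¬ i ≤ x) = (lrMin σ).filter (fun i => x < i) := by
    apply Finset.filter_congr
    intro p _
    simp [not_le]
  rw [he, h1, h4] at this
  omega

lemma βof_lrMin_card (h1 : (lrMin σ).card = n) (h2 : x ∈ lrMin σ) (h3 : σ x = y)
    (h4 : ((lrMin σ).filter (fun i => i ≤ x)).card = h)
    (hc : (Sof x y σ).card = (y : ℕ)) (hlt : ∀ p ∈ Sof x y σ, σ p < y) :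
    (lrMin (βof x y σ hc hlt)).card = n - h := by
  rw [← filter_gt_card h1 h4]
  refine Finset.card_bij (fun i _ => (↑((Sof x y σ).orderIsoOfFin hc i) : Fin m)) ?_ ?_ ?_
  · intro i hi
    have hmem : (↑((Sof x y σ).orderIsoOfFin hc i) : Fin m) ∈ Sof x y σ :=
      ((Sof x y σ).orderIsoOfFin hc i).2
    rw [Finset.mem_filter]
    constructor
    · rw [mem_lrMin_iff_βof h2 h3 hc hlt hmem]
      have : ((Sof x y σ).orderIsoOfFin hc).symm
          ⟨↑((Sof x y σ).orderIsoOfFin hc i), hmem⟩ = i := by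
        have he : (⟨↑((Sof x y σ).orderIsoOfFin hc i), hmem⟩ : {v // v ∈ Sof x y σ}) =
            (Sof x y σ).orderIsoOfFin hc i := Subtype.ext rfl
        rw [he, OrderIso.symm_apply_apply]
      rwa [this]
    · exact Finset.mem_Ioi.mp (Sof_subset x y σ hmem)
  · intro a _ b _ hab
    exact ((Sof x y σ).orderIsoOfFin hc).injective (Subtype.ext hab)
  · intro p hp
    obtain ⟨hpl, hpx⟩ := Finset.mem_filter.mp hp
    have hpS : p ∈ Sof x y σ := by
      refine Finset.mem_filter.mpr ⟨Finset.mem_Ioi.mpr hpx, ?_⟩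
      rw [← h3]
      exact mem_lrMin.mp hpl x hpx
    refine ⟨((Sof x y σ).orderIsoOfFin hc).symm ⟨p, hpS⟩, ?_, ?_⟩
    · exact (mem_lrMin_iff_βof h2 h3 hc hlt hpS).mp hpl
    · show (↑((Sof x y σ).orderIsoOfFin hc (((Sof x y σ).orderIsoOfFin hc).symm ⟨p, hpS⟩)) : Fin m) = p
      rw [OrderIso.apply_symm_apply]

end Inv2

section Inv3

variable {n h : ℕ} {x y : Fin m} {σ : Equiv.Perm (Fin m)}

lemma Uof_card (h2 : x ∈ lrMin σ) (h3 : σ x = y) :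
    ((Finset.Ioi y) \ Tof x σ).card = m - 1 - (x : ℕ) - (y : ℕ) := by
  rw [Finset.card_sdiff_of_subset (Tof_subset h2 h3), Fin.card_Ioi, Tof_card]; omega

lemma Qof_card (h2 : x ∈ lrMin σ) (h3 : σ x = y) :
    ((Finset.Ioi x) \ Sof x y σ).card = m - 1 - (x : ℕ) - (y : ℕ) := by
  rw [Finset.card_sdiff_of_subset (Sof_subset x y σ), Fin.card_Ioi, Sof_card h2 h3]

/-- extract the data from a permutation -/
noncomputable def ofPerm (σ : Equiv.Perm (Fin m)) (h1 : (lrMin σ).card = n)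
    (h2 : x ∈ lrMin σ) (h3 : σ x = y)
    (h4 : ((lrMin σ).filter (fun i => i ≤ x)).card = h) : BD m n h x y where
  T := Tof x σ
  hT := Tof_subset h2 h3
  hTc := Tof_card x σ
  S := Sof x y σ
  hS := Sof_subset x y σ
  hSc := Sof_card h2 h3
  α := αof x σ
  hα := αof_lrMin_card h2 h4
  β := βof x y σ (Sof_card h2 h3) (fun _ hp => lt_of_mem_Sof x y σ hp)
  hβ := βof_lrMin_card h1 h2 h3 h4 _ _
  γ := γof x y σ (Uof_card h2 h3) (Qof_card h2 h3) (fun _ hp => mem_Uof h2 h3 hp)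

lemma γof_apply {R : ℕ} (hUc : ((Finset.Ioi y) \ Tof x σ).card = R)
    (hQc : ((Finset.Ioi x) \ Sof x y σ).card = R)
    (hmem : ∀ p ∈ (Finset.Ioi x) \ Sof x y σ, σ p ∈ (Finset.Ioi y) \ Tof x σ)
    (i : Fin R) : γof x y σ hUc hQc hmem i =
      (((Finset.Ioi y) \ Tof x σ).orderIsoOfFin hUc).symm
        ⟨σ (((Finset.Ioi x) \ Sof x y σ).orderIsoOfFin hQc i),
          hmem _ (((Finset.Ioi x) \ Sof x y σ).orderIsoOfFin hQc i).2⟩ := rfl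

lemma toPerm_ofPerm (σ : Equiv.Perm (Fin m)) (h1 : (lrMin σ).card = n)
    (h2 : x ∈ lrMin σ) (h3 : σ x = y)
    (h4 : ((lrMin σ).filter (fun i => i ≤ x)).card = h) :
    (ofPerm σ h1 h2 h3 h4).toPerm = σ := by
  set d := ofPerm σ h1 h2 h3 h4 with hd
  apply Equiv.ext
  intro p
  rcases d.pos_cases p with hp | hp | hp | hp
  · rw [BD.toPerm_apply, d.fb_lt hp]
    show (↑((Tof x σ).orderIsoOfFin (Tof_card x σ) (αof x σ ⟨p.1, hp⟩)) : Fin m) = σ p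
    rw [αof_apply, OrderIso.apply_symm_apply]
  · subst hp
    rw [BD.toPerm_apply, d.fb_x]
    exact h3.symm
  · rw [BD.toPerm_apply, d.fb_S hp]
    apply Fin.ext
    show ((βof x y σ (Sof_card h2 h3) (fun _ hp => lt_of_mem_Sof x y σ hp)
      (((Sof x y σ).orderIsoOfFin (Sof_card h2 h3)).symm ⟨p, hp⟩)) : ℕ) = (σ p : ℕ)
    rw [βof_apply]
    show ((σ ((Sof x y σ).orderIsoOfFin (Sof_card h2 h3)
      (((Sof x y σ).orderIsoOfFin (Sof_card h2 h3)).symm ⟨p, hp⟩))) : ℕ) = (σ p : ℕ)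
    rw [OrderIso.apply_symm_apply]
  · rw [BD.toPerm_apply, d.fb_Q hp]
    show (↑(((Finset.Ioi y) \ Tof x σ).orderIsoOfFin (Uof_card h2 h3)
      (γof x y σ (Uof_card h2 h3) (Qof_card h2 h3) (fun _ hp => mem_Uof h2 h3 hp)
        ((((Finset.Ioi x) \ Sof x y σ).orderIsoOfFin (Qof_card h2 h3)).symm ⟨p, hp⟩))) : Fin m)
      = σ p
    rw [γof_apply]
    have he : (((Finset.Ioi x) \ Sof x y σ).orderIsoOfFin (Qof_card h2 h3))
        ((((Finset.Ioi x) \ Sof x y σ).orderIsoOfFin (Qof_card h2 h3)).symm ⟨p, hp⟩) =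
        ⟨p, hp⟩ := OrderIso.apply_symm_apply _ _
    simp only [he, OrderIso.apply_symm_apply]

end Inv3

section RoundTrip

variable {n h : ℕ} {x y : Fin m}

lemma oif_symm_congr {s t : Finset (Fin m)} (hst : s = t) {k : ℕ} (h1 : s.card = k)
    (h2 : t.card = k) (v : Fin m) (hv : v ∈ s) (hv' : v ∈ t) :
    (s.orderIsoOfFin h1).symm ⟨v, hv⟩ = (t.orderIsoOfFin h2).symm ⟨v, hv'⟩ := by
  subst hst; rfl

lemma oif_congr {s t : Finset (Fin m)} (hst : s = t) {k : ℕ} (h1 : s.card = k)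
    (h2 : t.card = k) (i : Fin k) :
    (↑(s.orderIsoOfFin h1 i) : Fin m) = ↑(t.orderIsoOfFin h2 i) := by
  subst hst; rfl

lemma bd_ext {d d' : BD m n h x y} (hT : d.T = d'.T) (hS : d.S = d'.S)
    (hα : d.α = d'.α) (hβ : d.β = d'.β) (hγ : d.γ = d'.γ) : d = d' := by
  cases d; cases d'
  dsimp only at hT hS hα hβ hγ
  subst hT; subst hS; subst hα; subst hβ; subst hγ
  rfl

lemma Tof_toPerm (d : BD m n h x y) : Tof x d.toPerm = d.T := by
  apply Finset.eq_of_subset_of_card_le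
  · intro v hv
    obtain ⟨j, hj, hje⟩ := Finset.mem_image.mp hv
    rw [← hje]
    exact d.fb_lt_mem (Finset.mem_Iio.mp hj)
  · rw [Tof_card, d.hTc]

lemma Sof_toPerm (d : BD m n h x y) : Sof x y d.toPerm = d.S := by
  ext p
  rw [Sof, Finset.mem_filter, Finset.mem_Ioi]
  constructor
  · rintro ⟨hxp, hlt⟩
    rcases d.pos_cases p with hp | hp | hp | hp
    · exact absurd hxp (not_lt.mpr (le_of_lt hp))
    · exact absurd hxp (hp ▸ lt_irrefl p)
    · exact hp
    · rw [BD.toPerm_apply] at hlt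
      exact absurd hlt (not_lt.mpr (le_of_lt (d.fb_Q_gt hp)))
  · intro hp
    refine ⟨Finset.mem_Ioi.mp (d.hS hp), ?_⟩
    rw [BD.toPerm_apply]
    exact d.fb_S_lt hp

lemma ofPerm_toPerm (d : BD m n h x y) (h1 : (lrMin d.toPerm).card = n)
    (h2 : x ∈ lrMin d.toPerm) (h3 : d.toPerm x = y)
    (h4 : ((lrMin d.toPerm).filter (fun i => i ≤ x)).card = h) :
    ofPerm d.toPerm h1 h2 h3 h4 = d := by
  have hTeq : Tof x d.toPerm = d.T := Tof_toPerm d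
  have hSeq : Sof x y d.toPerm = d.S := Sof_toPerm d
  refine bd_ext hTeq hSeq ?_ ?_ ?_
  · -- α component
    apply Equiv.ext
    intro i
    show αof x d.toPerm i = d.α i
    rw [αof_apply]
    have hfb : d.toPerm ⟨i.1, lt_trans i.2 x.isLt⟩ =
        ↑(d.T.orderIsoOfFin d.hTc (d.α i)) := by
      rw [BD.toPerm_apply, d.fb_lt i.2]
    have hv' : d.toPerm ⟨i.1, lt_trans i.2 x.isLt⟩ ∈ d.T := by
      rw [hfb]; exact (d.T.orderIsoOfFin d.hTc (d.α i)).2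
    refine (oif_symm_congr hTeq (Tof_card x d.toPerm) d.hTc _ _ hv').trans ?_
    have : (⟨d.toPerm ⟨i.1, lt_trans i.2 x.isLt⟩, hv'⟩ : {v // v ∈ d.T}) =
        d.T.orderIsoOfFin d.hTc (d.α i) := Subtype.ext hfb
    rw [this, OrderIso.symm_apply_apply]
  · -- β component
    apply Equiv.ext
    intro i
    apply Fin.ext
    show ((d.toPerm ((Sof x y d.toPerm).orderIsoOfFin (Sof_card h2 h3) i)) : ℕ) = (d.β i : ℕ)
    have hco : (↑((Sof x y d.toPerm).orderIsoOfFin (Sof_card h2 h3) i) : Fin m) =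
        ↑(d.S.orderIsoOfFin d.hSc i) := oif_congr hSeq _ _ i
    rw [hco]
    have hmem : (↑(d.S.orderIsoOfFin d.hSc i) : Fin m) ∈ d.S :=
      (d.S.orderIsoOfFin d.hSc i).2
    rw [BD.toPerm_apply, d.fb_S hmem]
    show ((d.β ((d.S.orderIsoOfFin d.hSc).symm
      ⟨↑(d.S.orderIsoOfFin d.hSc i), hmem⟩)) : ℕ) = (d.β i : ℕ)
    have : ((d.S.orderIsoOfFin d.hSc).symm ⟨↑(d.S.orderIsoOfFin d.hSc i), hmem⟩) = i := by
      have he : (⟨↑(d.S.orderIsoOfFin d.hSc i), hmem⟩ : {v // v ∈ d.S}) =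
          d.S.orderIsoOfFin d.hSc i := Subtype.ext rfl
      rw [he, OrderIso.symm_apply_apply]
    rw [this]
  · -- γ component
    apply Equiv.ext
    intro i
    show γof x y d.toPerm (Uof_card h2 h3) (Qof_card h2 h3)
      (fun _ hp => mem_Uof h2 h3 hp) i = d.γ i
    rw [γof_apply]
    have hQeq : (Finset.Ioi x) \ Sof x y d.toPerm = (Finset.Ioi x) \ d.S := by rw [hSeq]
    have hUeq : (Finset.Ioi y) \ Tof x d.toPerm = (Finset.Ioi y) \ d.T := by rw [hTeq]
    have hco : (↑(((Finset.Ioi x) \ Sof x y d.toPerm).orderIsoOfFin (Qof_card h2 h3) i) : Fin m)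
        = ↑(((Finset.Ioi x) \ d.S).orderIsoOfFin d.hQc i) := oif_congr hQeq _ _ i
    have hmem : (↑(((Finset.Ioi x) \ d.S).orderIsoOfFin d.hQc i) : Fin m) ∈
        (Finset.Ioi x) \ d.S := (((Finset.Ioi x) \ d.S).orderIsoOfFin d.hQc i).2
    have hfb : d.toPerm (↑(((Finset.Ioi x) \ d.S).orderIsoOfFin d.hQc i)) =
        ↑(((Finset.Ioi y) \ d.T).orderIsoOfFin d.hUc (d.γ i)) := by
      rw [BD.toPerm_apply, d.fb_Q hmem]
      have : ((((Finset.Ioi x) \ d.S).orderIsoOfFin d.hQc).symm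
          ⟨↑(((Finset.Ioi x) \ d.S).orderIsoOfFin d.hQc i), hmem⟩) = i := by
        have he : (⟨↑(((Finset.Ioi x) \ d.S).orderIsoOfFin d.hQc i), hmem⟩ :
            {v // v ∈ (Finset.Ioi x) \ d.S}) =
            ((Finset.Ioi x) \ d.S).orderIsoOfFin d.hQc i := Subtype.ext rfl
        rw [he, OrderIso.symm_apply_apply]
      rw [this]
    have hv' : d.toPerm (↑(((Finset.Ioi x) \ Sof x y d.toPerm).orderIsoOfFin
        (Qof_card h2 h3) i)) ∈ (Finset.Ioi y) \ d.T := by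
      rw [hco, hfb]
      exact (((Finset.Ioi y) \ d.T).orderIsoOfFin d.hUc (d.γ i)).2
    rw [oif_symm_congr hUeq (Uof_card h2 h3) d.hUc _ _ hv']
    have : (⟨d.toPerm (↑(((Finset.Ioi x) \ Sof x y d.toPerm).orderIsoOfFin
        (Qof_card h2 h3) i)), hv'⟩ : {v // v ∈ (Finset.Ioi y) \ d.T}) =
        ((Finset.Ioi y) \ d.T).orderIsoOfFin d.hUc (d.γ i) := by
      apply Subtype.ext
      show d.toPerm _ = _
      rw [hco, hfb]
    rw [this, OrderIso.symm_apply_apply]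

end RoundTrip

section Final

variable {n h : ℕ} {x y : Fin m}

/-- the bijection between the data and the permutations being counted -/
noncomputable def theEquiv (hh1 : 1 ≤ h) (hhn : h ≤ n) :
    BD m n h x y ≃ {σ : Equiv.Perm (Fin m) // (lrMin σ).card = n ∧ x ∈ lrMin σ ∧
      σ x = y ∧ ((lrMin σ).filter (fun i => i ≤ x)).card = h} where
  toFun d := ⟨d.toPerm, d.card_lrMin hh1 hhn, d.x_mem_lrMin, d.toPerm_x, d.card_filter_le hh1⟩
  invFun s := ofPerm s.1 s.2.1 s.2.2.1 s.2.2.2.1 s.2.2.2.2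
  left_inv d := ofPerm_toPerm d _ _ _ _
  right_inv s := Subtype.ext (toPerm_ofPerm _ _ _ _ _)

/-- the data is equivalent to a product of standard types -/
noncomputable def prodEquiv : BD m n h x y ≃
    ({α : Equiv.Perm (Fin (x : ℕ)) // (lrMin α).card = h - 1} ×
      {β : Equiv.Perm (Fin (y : ℕ)) // (lrMin β).card = n - h} ×
      {T : Finset (Fin m) // T ∈ (Finset.Ioi y).powersetCard (x : ℕ)} ×
      {S : Finset (Fin m) // S ∈ (Finset.Ioi x).powersetCard (y : ℕ)} ×
      Equiv.Perm (Fin (m - 1 - (x : ℕ) - (y : ℕ)))) where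
  toFun d := ⟨⟨d.α, d.hα⟩, ⟨d.β, d.hβ⟩,
    ⟨d.T, Finset.mem_powersetCard.mpr ⟨d.hT, d.hTc⟩⟩,
    ⟨d.S, Finset.mem_powersetCard.mpr ⟨d.hS, d.hSc⟩⟩, d.γ⟩
  invFun p :=
    { T := p.2.2.1.1
      hT := (Finset.mem_powersetCard.mp p.2.2.1.2).1
      hTc := (Finset.mem_powersetCard.mp p.2.2.1.2).2
      S := p.2.2.2.1.1
      hS := (Finset.mem_powersetCard.mp p.2.2.2.1.2).1
      hSc := (Finset.mem_powersetCard.mp p.2.2.2.1.2).2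
      α := p.1.1
      hα := p.1.2
      β := p.2.1.1
      hβ := p.2.1.2
      γ := p.2.2.2.2 }
  left_inv d := rfl
  right_inv p := rfl

end Final

end CardHth

open CardHth in
theorem card_hth_lr_min_at' (m n k h : ℕ) (hm : m = n + k) (hn : 1 ≤ n)
    (hh1 : 1 ≤ h) (hhn : h ≤ n) (x y : Fin m) (hxy : (x : ℕ) + (y : ℕ) + 1 ≤ m) :
    (Finset.univ.filter (fun σ : Equiv.Perm (Fin m) =>
        (lrMin σ).card = n ∧ x ∈ lrMin σ ∧ σ x = y ∧
        ((lrMin σ).filter (fun i => i ≤ x)).card = h)).card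
      = stirlingLR (x : ℕ) (h - 1) * stirlingLR (y : ℕ) (n - h) *
        Nat.choose (m - 1 - (x : ℕ)) (m - 1 - (x : ℕ) - (y : ℕ)) *
        Nat.choose (m - 1 - (y : ℕ)) (m - 1 - (x : ℕ) - (y : ℕ)) *
        Nat.factorial (m - 1 - (x : ℕ) - (y : ℕ)) := by
  classical
  have hcard : (Finset.univ.filter (fun σ : Equiv.Perm (Fin m) =>
      (lrMin σ).card = n ∧ x ∈ lrMin σ ∧ σ x = y ∧
      ((lrMin σ).filter (fun i => i ≤ x)).card = h)).card
      = Fintype.card {σ : Equiv.Perm (Fin m) // (lrMin σ).card = n ∧ x ∈ lrMin σ ∧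
        σ x = y ∧ ((lrMin σ).filter (fun i => i ≤ x)).card = h} := by
    rw [Fintype.card_subtype]
  rw [hcard, ← Fintype.card_congr ((theEquiv hh1 hhn).symm.trans prodEquiv).symm]
  rw [Fintype.card_prod, Fintype.card_prod, Fintype.card_prod, Fintype.card_prod]
  have e1 : Fintype.card {α : Equiv.Perm (Fin (x : ℕ)) // (lrMin α).card = h - 1}
      = stirlingLR (x : ℕ) (h - 1) := by
    rw [Fintype.card_subtype, stirlingLR]
  have e2 : Fintype.card {β : Equiv.Perm (Fin (y : ℕ)) // (lrMin β).card = n - h}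
      = stirlingLR (y : ℕ) (n - h) := by
    rw [Fintype.card_subtype, stirlingLR]
  have e3 : Fintype.card {T : Finset (Fin m) // T ∈ (Finset.Ioi y).powersetCard (x : ℕ)}
      = Nat.choose (m - 1 - (y : ℕ)) (m - 1 - (x : ℕ) - (y : ℕ)) := by
    rw [Fintype.card_coe, Finset.card_powersetCard, Fin.card_Ioi]
    have hle : (x : ℕ) ≤ m - 1 - (y : ℕ) := by omega
    have hsub : m - 1 - (x : ℕ) - (y : ℕ) = (m - 1 - (y : ℕ)) - (x : ℕ) := by omega
    rw [hsub, Nat.choose_symm hle]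
  have e4 : Fintype.card {S : Finset (Fin m) // S ∈ (Finset.Ioi x).powersetCard (y : ℕ)}
      = Nat.choose (m - 1 - (x : ℕ)) (m - 1 - (x : ℕ) - (y : ℕ)) := by
    rw [Fintype.card_coe, Finset.card_powersetCard, Fin.card_Ioi]
    have hle : (y : ℕ) ≤ m - 1 - (x : ℕ) := by omega
    have hsub : m - 1 - (x : ℕ) - (y : ℕ) = (m - 1 - (x : ℕ)) - (y : ℕ) := by omega
    rw [hsub, Nat.choose_symm hle]
  have e5 : Fintype.card (Equiv.Perm (Fin (m - 1 - (x : ℕ) - (y : ℕ))))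
      = Nat.factorial (m - 1 - (x : ℕ) - (y : ℕ)) := by
    rw [Fintype.card_perm, Fintype.card_fin]
  rw [e1, e2, e3, e4, e5]
  ring


/-- Let `m = n + k` with `n ≥ 1`, `k ≥ 0`, fix `h ∈ [n]` and (0-indexed) position `x` and
value `y` with `x + y + 1 ≤ m` (the 0-indexed form of the 1-indexed condition
`x + y ≤ m + 1`).  The number of permutations `σ` of size `m` with exactly `n` left-to-right
minima whose `h`-th left-to-right minimum is at position `x` with value `y` equals
`S(x, h−1) · S(y, n−h) · C(m−1−x, m−1−x−y) · C(m−1−y, m−1−x−y) · (m−1−x−y)!`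
(the 0-indexed form of
`S(x−1, h−1) · S(y−1, n−h) · C(m−x, m−x−y+1) · C(m−y, m−x−y+1) · (m−x−y+1)!`). -/
theorem card_hth_lr_min_at (m n k h : ℕ) (hm : m = n + k) (hn : 1 ≤ n)
    (hh1 : 1 ≤ h) (hhn : h ≤ n) (x y : Fin m) (hxy : (x : ℕ) + (y : ℕ) + 1 ≤ m) :
    (Finset.univ.filter (fun σ : Equiv.Perm (Fin m) =>
        (lrMin σ).card = n ∧ x ∈ lrMin σ ∧ σ x = y ∧
        ((lrMin σ).filter (fun i => i ≤ x)).card = h)).card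
      = stirlingLR (x : ℕ) (h - 1) * stirlingLR (y : ℕ) (n - h) *
        Nat.choose (m - 1 - (x : ℕ)) (m - 1 - (x : ℕ) - (y : ℕ)) *
        Nat.choose (m - 1 - (y : ℕ)) (m - 1 - (x : ℕ) - (y : ℕ)) *
        Nat.factorial (m - 1 - (x : ℕ) - (y : ℕ)) :=
  card_hth_lr_min_at' m n k h hm hn hh1 hhn x y hxy
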